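/- Let f, g : ℝ → ℝ be differentiable with f(0) = g(0) = 0, and let α β : ℝ, γ := Complex.sqrt(4α+β²) ≠ 0. Define Φ(t) = exp(f(t) + (β/2)g(t)) · Q(t) where Q(t) = !![cosh(γg(t)/2) - (β/γ)sinh(γg(t)/2), (2/γ)sinh(γg(t)/2); (2α/γ)sinh(γg(t)/2), cosh(γg(t)/2) + (β/γ)sinh(γg(t)/2)]. Then Φ'(t) = A(t)Φ(t) and Φ(0) = I, where A(t) = !![f'(t), g'(t); α g'(t), f'(t) + β g'(t)]. -/

import Mathlib

set_option maxHeartbeats 1000000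


theorem stmt_10 (f g : ℝ → ℝ) (hf : Differentiable ℝ f) (hg : Differentiable ℝ g)
    (hf0 : f 0 = 0) (hg0 : g 0 = 0) (α β : ℝ) (γ : ℂ)
    (hγ : γ ^ 2 = (4*α + β^2 : ℂ)) (hγ0 : γ ≠ 0)
    (A Q Φ : ℝ → Matrix (Fin 2) (Fin 2) ℂ)
    (hA : ∀ t, A t = !![((deriv f t : ℝ) : ℂ), ((deriv g t : ℝ) : ℂ);
        (α : ℂ) * ((deriv g t : ℝ) : ℂ), ((deriv f t : ℝ) : ℂ) + (β : ℂ) * ((deriv g t : ℝ) : ℂ)])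
    (hQ : ∀ t, Q t = !![Complex.cosh (γ * (g t) / 2) - (β / γ) * Complex.sinh (γ * (g t) / 2),
        (2 / γ) * Complex.sinh (γ * (g t) / 2);
        (2 * α / γ) * Complex.sinh (γ * (g t) / 2),
        Complex.cosh (γ * (g t) / 2) + (β / γ) * Complex.sinh (γ * (g t) / 2)])
    (hΦ : ∀ t, Φ t = Complex.exp ((f t : ℂ) + (β / 2) * (g t : ℂ)) • Q t) :
    (∀ t i j, HasDerivAt (fun s => Φ s i j) ((A t * Φ t) i j) t) ∧ Φ 0 = 1 := by
  have hα : (α : ℂ) = (γ ^ 2 - β ^ 2) / 4 := by linear_combination -hγ / 4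
  constructor
  · intro t i j
    have hF : HasDerivAt (fun s => ((f s : ℝ) : ℂ)) ((deriv f t : ℝ) : ℂ) t :=
      ((hf t).hasDerivAt).ofReal_comp
    have hG : HasDerivAt (fun s => ((g s : ℝ) : ℂ)) ((deriv g t : ℝ) : ℂ) t :=
      ((hg t).hasDerivAt).ofReal_comp
    set F' : ℂ := ((deriv f t : ℝ) : ℂ)
    set G' : ℂ := ((deriv g t : ℝ) : ℂ)
    have hu : HasDerivAt (fun s => ((f s : ℂ) + (β / 2) * (g s : ℂ)))
        (F' + (β / 2) * G') t := hF.add (hG.const_mul _)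
    have he : HasDerivAt (fun s => Complex.exp ((f s : ℂ) + (β / 2) * (g s : ℂ)))
        (Complex.exp ((f t : ℂ) + (β / 2) * (g t : ℂ)) * (F' + (β / 2) * G')) t := hu.cexp
    have hv : HasDerivAt (fun s => γ * ((g s : ℝ) : ℂ) / 2) (γ * G' / 2) t :=
      (hG.const_mul γ).div_const 2
    have hc : HasDerivAt (fun s => Complex.cosh (γ * ((g s : ℝ) : ℂ) / 2))
        (Complex.sinh (γ * (g t : ℂ) / 2) * (γ * G' / 2)) t := (Complex.hasDerivAt_cosh _).comp t hv
    have hs : HasDerivAt (fun s => Complex.sinh (γ * ((g s : ℝ) : ℂ) / 2))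
        (Complex.cosh (γ * (g t : ℂ) / 2) * (γ * G' / 2)) t := (Complex.hasDerivAt_sinh _).comp t hv
    fin_cases i <;> fin_cases j <;>
      simp only [hΦ, hQ, Matrix.smul_apply, Matrix.cons_val', Matrix.cons_val_zero,
        Matrix.cons_val_one, Matrix.head_cons, Matrix.head_fin_const, Matrix.empty_val',
        Matrix.cons_val_fin_one, Matrix.of_apply, smul_eq_mul, Fin.zero_eta, Fin.mk_one,
        Fin.isValue]
    · have h := he.mul (hc.sub (hs.const_mul (β / γ)))
      convert h using 1
      · rfl
      · rfl
      simp only [hA, hQ, Matrix.mul_apply, Fin.sum_univ_two, Matrix.smul_apply,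
        Matrix.cons_val', Matrix.cons_val_zero, Matrix.cons_val_one, Matrix.head_cons,
        Matrix.empty_val', Matrix.cons_val_fin_one, Matrix.of_apply, smul_eq_mul, Fin.isValue, Pi.sub_apply]
      try rw [hα]
      field_simp
      ring
    · have h := he.mul (hs.const_mul (2 / γ))
      convert h using 1
      · rfl
      · rfl
      simp only [hA, hQ, Matrix.mul_apply, Fin.sum_univ_two, Matrix.smul_apply,
        Matrix.cons_val', Matrix.cons_val_zero, Matrix.cons_val_one, Matrix.head_cons,
        Matrix.empty_val', Matrix.cons_val_fin_one, Matrix.of_apply, smul_eq_mul, Fin.isValue]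
      try rw [hα]
      field_simp
      ring
    · have h := he.mul (hs.const_mul (2 * α / γ))
      convert h using 1
      · rfl
      · rfl
      simp only [hA, hQ, Matrix.mul_apply, Fin.sum_univ_two, Matrix.smul_apply,
        Matrix.cons_val', Matrix.cons_val_zero, Matrix.cons_val_one, Matrix.head_cons,
        Matrix.empty_val', Matrix.cons_val_fin_one, Matrix.of_apply, smul_eq_mul, Fin.isValue]
      try rw [hα]
      field_simp
      ring
    · have h := he.mul (hc.add (hs.const_mul (β / γ)))
      convert h using 1
      · rfl
      · rfl
      simp only [hA, hQ, Matrix.mul_apply, Fin.sum_univ_two, Matrix.smul_apply,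
        Matrix.cons_val', Matrix.cons_val_zero, Matrix.cons_val_one, Matrix.head_cons,
        Matrix.empty_val', Matrix.cons_val_fin_one, Matrix.of_apply, smul_eq_mul, Fin.isValue, Pi.add_apply]
      try rw [hα]
      field_simp
      ring
  · rw [hΦ, hQ, hf0, hg0]
    norm_num
    exact (Matrix.one_fin_two).symm
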